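/- Define g(γ) = sup over ξ ∈ [0,1] of (H₂((1-γ)·ξ) - H₂(γ·ξ)) for γ ∈ [0,1]. Then g is nonincreasing on [0,1]: for all 0 ≤ γ₁ ≤ γ₂ ≤ 1, g(γ₂) ≤ g(γ₁). -/

import Mathlib

/-- The binary entropy `H₂(x) = -x·log₂ x - (1-x)·log₂(1-x)` (with the conventions
`H₂(0) = H₂(1) = 0`, automatic since `Real.logb 2 0 = 0`). -/
noncomputable def binEnt (x : ℝ) : ℝ :=
  -(x * Real.logb 2 x) - (1 - x) * Real.logb 2 (1 - x)

/-- The amplitude damping capacity function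
`g(γ) = sup_{ξ ∈ [0,1]} (H₂((1-γ)ξ) - H₂(γξ))`. -/
noncomputable def adCap (γ : ℝ) : ℝ :=
  ⨆ ξ : Set.Icc (0 : ℝ) 1, (binEnt ((1 - γ) * ↑ξ) - binEnt (γ * ↑ξ))

lemma binEnt_eq (x : ℝ) :
    binEnt x = (Real.negMulLog x + Real.negMulLog (1 - x)) / Real.log 2 := by
  simp [binEnt, Real.negMulLog, Real.logb, ← add_div]
  ring

@[fun_prop] lemma binEnt_continuous : Continuous binEnt := by
  simp only [funext binEnt_eq]
  fun_prop

lemma binEnt_hasDerivAt {x : ℝ} (h0 : x ≠ 0) (h1 : x ≠ 1) :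
    HasDerivAt binEnt ((Real.log (1 - x) - Real.log x) / Real.log 2) x := by
  have h1' : (1 : ℝ) - x ≠ 0 := sub_ne_zero.2 (Ne.symm h1)
  have hA := Real.hasDerivAt_negMulLog h0
  have hB := (Real.hasDerivAt_negMulLog h1').comp x
    ((hasDerivAt_id x).const_sub 1)
  have := (hA.add hB).div_const (Real.log 2)
  rw [show binEnt = fun x => (Real.negMulLog x + Real.negMulLog (1 - x)) / Real.log 2
    from funext binEnt_eq]
  exact this.congr_deriv (by ring)

/-- Pointwise antitonicity in `γ`. -/
lemma key {ξ : ℝ} (hξ0 : 0 ≤ ξ) (hξ1 : ξ ≤ 1) :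
    AntitoneOn (fun γ : ℝ => binEnt ((1 - γ) * ξ) - binEnt (γ * ξ)) (Set.Icc 0 1) := by
  rcases eq_or_lt_of_le hξ0 with h0 | hξpos
  · simp [← h0]
    exact antitoneOn_const
  refine antitoneOn_of_hasDerivWithinAt_nonpos (f' := fun γ =>
      (Real.log (1 - (1 - γ) * ξ) - Real.log ((1 - γ) * ξ)) / Real.log 2 * (-ξ) -
      (Real.log (1 - γ * ξ) - Real.log (γ * ξ)) / Real.log 2 * ξ)
    (convex_Icc 0 1) ?_ ?_ ?_
  · exact ((binEnt_continuous.comp (by fun_prop)).sub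
      (binEnt_continuous.comp (by fun_prop))).continuousOn
  · intro γ hγ
    rw [interior_Icc] at hγ
    obtain ⟨hγ0, hγ1⟩ := hγ
    have ha0 : (0:ℝ) < (1 - γ) * ξ := mul_pos (by linarith) hξpos
    have ha1 : (1 - γ) * ξ < 1 := by nlinarith
    have hb0 : (0:ℝ) < γ * ξ := mul_pos hγ0 hξpos
    have hb1 : γ * ξ < 1 := by nlinarith
    have hA := (binEnt_hasDerivAt ha0.ne' ha1.ne).comp γ
      (((hasDerivAt_id γ).const_sub 1).mul_const ξ)
    have hB := (binEnt_hasDerivAt hb0.ne' hb1.ne).comp γ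
      ((hasDerivAt_id γ).mul_const ξ)
    have := hA.sub hB
    simp only [neg_one_mul, one_mul, mul_neg_one] at this ⊢
    exact (this.congr_deriv (by ring)).hasDerivWithinAt
  · intro γ hγ
    rw [interior_Icc] at hγ
    obtain ⟨hγ0, hγ1⟩ := hγ
    have ha0 : (0:ℝ) < (1 - γ) * ξ := mul_pos (by linarith) hξpos
    have hb0 : (0:ℝ) < γ * ξ := mul_pos hγ0 hξpos
    have key1 : Real.log (γ * ξ) ≤ Real.log (1 - (1 - γ) * ξ) :=
      Real.log_le_log hb0 (by nlinarith)
    have key2 : Real.log ((1 - γ) * ξ) ≤ Real.log (1 - γ * ξ) :=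
      Real.log_le_log ha0 (by nlinarith)
    have hlog2 : (0:ℝ) < Real.log 2 := Real.log_pos one_lt_two
    rw [div_mul_eq_mul_div, div_mul_eq_mul_div, div_sub_div_same, div_nonpos_iff]
    right
    constructor
    · nlinarith [mul_le_mul_of_nonneg_left (add_le_add key1 key2) hξ0]
    · exact hlog2.le

/-- The amplitude damping capacity function `g` is nonincreasing on `[0,1]`:
for all `0 ≤ γ₁ ≤ γ₂ ≤ 1`, `g(γ₂) ≤ g(γ₁)`. -/
theorem adCap_antitone (γ₁ γ₂ : ℝ) (h0 : 0 ≤ γ₁) (h12 : γ₁ ≤ γ₂) (h1 : γ₂ ≤ 1) :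
    adCap γ₂ ≤ adCap γ₁ := by
  unfold adCap
  have hbdd : BddAbove (Set.range fun ξ : Set.Icc (0:ℝ) 1 =>
      binEnt ((1 - γ₁) * ↑ξ) - binEnt (γ₁ * ↑ξ)) := by
    have : Continuous fun ξ : Set.Icc (0:ℝ) 1 =>
        binEnt ((1 - γ₁) * ↑ξ) - binEnt (γ₁ * ↑ξ) := by fun_prop
    exact (isCompact_range this).bddAbove
  refine ciSup_mono hbdd fun ξ => ?_
  exact key ξ.2.1 ξ.2.2 ⟨h0, le_trans h12 h1⟩ ⟨le_trans h0 h12, h1⟩ h12
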